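/- Characterization of Radau polynomials by orthogonality: Let q ≥ 1 and let f be a polynomial of degree ≤ q with real coefficients satisfying ∫_{−1}^{1} f(x) (x+1)^p dx = 0 for every p = 1, …, q. Then f is a scalar multiple of the q-th Radau polynomial: f = c · Q_q for some c ∈ ℝ, where Q_q(x) = (P_q(x) + P_{q+1}(x))/(x+1). -/

import Mathlib

open MeasureTheory intervalIntegral Polynomial

/-- The `q`-th Legendre polynomial, via Rodrigues' formula
`P_q(x) = (1/(2^q q!)) (d/dx)^q ((x² − 1)^q)`. -/
noncomputable def legendrePoly (q : ℕ) : Polynomial ℝ :=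
  Polynomial.C (1 / (2 ^ q * (Nat.factorial q) : ℝ)) *
    (Polynomial.derivative^[q] ((Polynomial.X ^ 2 - 1) ^ q))

private lemma intInt (p : Polynomial ℝ) :
    IntervalIntegrable (fun x => p.eval x) volume (-1 : ℝ) 1 :=
  (by simpa using p.continuous : Continuous fun x => p.eval x).intervalIntegrable _ _

/-- FTC for polynomials on `[-1,1]`. -/
private lemma poly_ftc (p : Polynomial ℝ) :
    ∫ x in (-1 : ℝ)..1, (Polynomial.derivative p).eval x = p.eval 1 - p.eval (-1) := by
  have h := intervalIntegral.integral_deriv_eq_sub' (a := (-1 : ℝ)) (b := 1)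
    (fun x => p.eval x) (f' := fun x => (Polynomial.derivative p).eval x)
    (funext fun x => Polynomial.deriv p)
    (fun x _ => p.differentiableAt)
    ((by simpa using (Polynomial.derivative p).continuous :
        Continuous fun x => (Polynomial.derivative p).eval x).continuousOn)
  simpa using h

/-- Boundary vanishing of iterated derivatives of `(x²-1)^n`. -/
private lemma boundary_zero (n m : ℕ) (hm : m < n) (x : ℝ) (hx : x = 1 ∨ x = -1) :
    (Polynomial.derivative^[m] (((Polynomial.X : Polynomial ℝ) ^ 2 - 1) ^ n)).eval x = 0 := by
  obtain ⟨c, hc⟩ :=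
    Polynomial.pow_sub_dvd_iterate_derivative_pow ((Polynomial.X : Polynomial ℝ) ^ 2 - 1) n m
  have hnm : n - m ≠ 0 := by omega
  rcases hx with hx | hx <;>
    simp [hc, hx, Polynomial.eval_pow, zero_pow hnm]

/-- Integration by parts with vanishing boundary terms. -/
private lemma parts (u v : Polynomial ℝ) (h1 : u.eval 1 = 0) (h2 : u.eval (-1) = 0) :
    ∫ x in (-1 : ℝ)..1, (Polynomial.derivative u).eval x * v.eval x
      = - ∫ x in (-1 : ℝ)..1, u.eval x * (Polynomial.derivative v).eval x := by
  have key := poly_ftc (u * v)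
  rw [Polynomial.derivative_mul] at key
  have hsplit :
      ∫ x in (-1 : ℝ)..1,
          ((Polynomial.derivative u * v) + (u * Polynomial.derivative v)).eval x
        = (∫ x in (-1 : ℝ)..1, (Polynomial.derivative u).eval x * v.eval x)
          + ∫ x in (-1 : ℝ)..1, u.eval x * (Polynomial.derivative v).eval x := by
    simp only [Polynomial.eval_add, Polynomial.eval_mul]
    exact intervalIntegral.integral_add
      (((Polynomial.derivative u).continuous.mul v.continuous).intervalIntegrable _ _)
      ((u.continuous.mul (Polynomial.derivative v).continuous).intervalIntegrable _ _)
  rw [hsplit] at key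
  simp only [Polynomial.eval_mul, h1, h2, zero_mul, sub_zero] at key
  linarith [key]

/-- Orthogonality of Legendre polynomials against lower-degree polynomials. -/
private lemma legendre_orth (n : ℕ) (g : Polynomial ℝ) (hg : g.natDegree < n) :
    ∫ x in (-1 : ℝ)..1, (legendrePoly n).eval x * g.eval x = 0 := by
  set W : Polynomial ℝ := ((Polynomial.X : Polynomial ℝ) ^ 2 - 1) ^ n with hW
  have main : ∀ k, k ≤ n →
      ∫ x in (-1 : ℝ)..1, (Polynomial.derivative^[n] W).eval x * g.eval x
        = (-1 : ℝ) ^ k *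
          ∫ x in (-1 : ℝ)..1,
            (Polynomial.derivative^[n - k] W).eval x * (Polynomial.derivative^[k] g).eval x := by
    intro k
    induction k with
    | zero => intro _; simp
    | succ k ih =>
      intro hk
      have hk' : k ≤ n := by omega
      rw [ih hk']
      have hm : n - k = (n - (k + 1)) + 1 := by omega
      have hb1 : (Polynomial.derivative^[n - (k + 1)] W).eval 1 = 0 :=
        boundary_zero n _ (by omega) 1 (Or.inl rfl)
      have hb2 : (Polynomial.derivative^[n - (k + 1)] W).eval (-1) = 0 :=
        boundary_zero n _ (by omega) (-1) (Or.inr rfl)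
      have hstep := parts (Polynomial.derivative^[n - (k + 1)] W)
        (Polynomial.derivative^[k] g) hb1 hb2
      rw [hm, Function.iterate_succ_apply']
      rw [hstep, show (Polynomial.derivative^[k + 1] g)
        = Polynomial.derivative (Polynomial.derivative^[k] g)
        from Function.iterate_succ_apply' _ _ _]
      ring
  have hzero : Polynomial.derivative^[n] g = 0 := Polynomial.iterate_derivative_eq_zero hg
  have h0 := main n le_rfl
  rw [hzero] at h0
  simp only [Nat.sub_self, Function.iterate_zero_apply, Polynomial.eval_zero, mul_zero,
    intervalIntegral.integral_zero, mul_zero] at h0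
  have : ∫ x in (-1 : ℝ)..1, (legendrePoly n).eval x * g.eval x
      = (1 / (2 ^ n * (Nat.factorial n) : ℝ)) *
        ∫ x in (-1 : ℝ)..1, (Polynomial.derivative^[n] W).eval x * g.eval x := by
    rw [← intervalIntegral.integral_const_mul]
    congr 1
    funext x
    simp [legendrePoly, hW, mul_assoc]
  rw [this, h0, mul_zero]

/-- `natDegree` and nonvanishing of the Legendre polynomial. -/
private lemma legendre_coeff_ne (n : ℕ) : (legendrePoly n).coeff n ≠ 0 := by
  have hW : (((Polynomial.X : Polynomial ℝ) ^ 2 - 1) ^ n).coeff (2 * n) = 1 := by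
    have hm : (((Polynomial.X : Polynomial ℝ) ^ 2 - 1)).Monic := by
      simpa using Polynomial.monic_X_pow_sub_C (1 : ℝ) (n := 2) two_ne_zero
    have hmn := hm.pow (n := n)
    have h2deg : (((Polynomial.X : Polynomial ℝ) ^ 2 - 1)).natDegree = 2 := by
      have hrw : ((Polynomial.X : Polynomial ℝ) ^ 2 - 1)
          = (Polynomial.X : Polynomial ℝ) ^ 2 - Polynomial.C 1 := by rw [map_one]
      rw [hrw, Polynomial.natDegree_X_pow_sub_C]
    have hd : (((Polynomial.X : Polynomial ℝ) ^ 2 - 1) ^ n).natDegree = 2 * n := by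
      rw [hm.natDegree_pow, h2deg]; ring
    have := hmn.leadingCoeff
    rwa [Polynomial.leadingCoeff, hd] at this
  have hcoeff : (Polynomial.derivative^[n] (((Polynomial.X : Polynomial ℝ) ^ 2 - 1) ^ n)).coeff n
      = ((n + n).descFactorial n : ℝ) := by
    rw [Polynomial.coeff_iterate_derivative]
    rw [show n + n = 2 * n by ring, hW]
    simp
  have hne : (((n + n).descFactorial n : ℝ)) ≠ 0 := by
    have : (n + n).descFactorial n ≠ 0 := by
      simp [Nat.descFactorial_eq_zero_iff_lt]
    exact_mod_cast this
  have hc : (1 / (2 ^ n * (Nat.factorial n) : ℝ)) ≠ 0 := by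
    apply one_div_ne_zero
    have := Nat.factorial_pos n
    positivity
  simp only [legendrePoly, Polynomial.coeff_C_mul, hcoeff]
  exact mul_ne_zero hc hne

private lemma legendre_natDegree_le (n : ℕ) : (legendrePoly n).natDegree ≤ n := by
  have h1 : ((((Polynomial.X : Polynomial ℝ) ^ 2 - 1)) ^ n).natDegree ≤ 2 * n := by
    calc ((((Polynomial.X : Polynomial ℝ) ^ 2 - 1)) ^ n).natDegree
        ≤ n * (((Polynomial.X : Polynomial ℝ) ^ 2 - 1)).natDegree :=
          Polynomial.natDegree_pow_le
      _ ≤ n * 2 := by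
          gcongr
          calc (((Polynomial.X : Polynomial ℝ) ^ 2 - 1)).natDegree
              ≤ max ((Polynomial.X : Polynomial ℝ) ^ 2).natDegree (1 : Polynomial ℝ).natDegree :=
                Polynomial.natDegree_sub_le _ _
            _ ≤ 2 := by simp
      _ = 2 * n := by ring
  have h2 := Polynomial.natDegree_iterate_derivative
    ((((Polynomial.X : Polynomial ℝ) ^ 2 - 1)) ^ n) n
  calc (legendrePoly n).natDegree
      ≤ (Polynomial.derivative^[n] ((((Polynomial.X : Polynomial ℝ) ^ 2 - 1)) ^ n)).natDegree := by
        unfold legendrePoly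
        exact Polynomial.natDegree_C_mul_le _ _
    _ ≤ ((((Polynomial.X : Polynomial ℝ) ^ 2 - 1)) ^ n).natDegree - n := h2
    _ ≤ 2 * n - n := by omega
    _ = n := by omega

private lemma legendre_natDegree (n : ℕ) : (legendrePoly n).natDegree = n :=
  le_antisymm (legendre_natDegree_le n)
    (Polynomial.le_natDegree_of_ne_zero (legendre_coeff_ne n))

/-- Characterization of Radau polynomials by orthogonality: if `f` is a polynomial of
degree `≤ q` with `∫_{−1}^{1} f(x) (x+1)^p dx = 0` for `p = 1, …, q`, then `f` is a scalar
multiple of the `q`-th Radau polynomial `Q_q = (P_q + P_{q+1})/(x+1)`. -/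
private lemma sum_orth (n : ℕ) (g : Polynomial ℝ) (hg : g.natDegree < n) :
    ∫ x in (-1 : ℝ)..1, (legendrePoly n + legendrePoly (n + 1)).eval x * g.eval x = 0 := by
  have h1 := legendre_orth n g hg
  have h2 := legendre_orth (n + 1) g (by omega)
  have hadd := intervalIntegral.integral_add
    (a := (-1 : ℝ)) (b := 1) (μ := MeasureTheory.volume)
    (f := fun x => (legendrePoly n).eval x * g.eval x)
    (g := fun x => (legendrePoly (n + 1)).eval x * g.eval x)
    (Continuous.intervalIntegrable
      (Continuous.mul (Polynomial.continuous _) (Polynomial.continuous _)) _ _)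
    (Continuous.intervalIntegrable
      (Continuous.mul (Polynomial.continuous _) (Polynomial.continuous _)) _ _)
  simp only [Polynomial.eval_add, add_mul]
  rw [hadd, h1, h2]
  norm_num

/-- Orthogonality of the Radau polynomial `Q` against `(x+1)^p` for `1 ≤ p ≤ q`. -/
private lemma Q_orth (q : ℕ) (Q : Polynomial ℝ)
    (hQ : legendrePoly q + legendrePoly (q + 1) = (Polynomial.X + Polynomial.C 1) * Q)
    (p : ℕ) (hp1 : 1 ≤ p) (hpq : p ≤ q) :
    ∫ x in (-1 : ℝ)..1, Q.eval x * (x + 1) ^ p = 0 := by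
  have hdeg : (((Polynomial.X : Polynomial ℝ) + Polynomial.C 1) ^ (p - 1)).natDegree < q := by
    rw [Polynomial.natDegree_pow, Polynomial.natDegree_X_add_C]
    omega
  have hsum := sum_orth q (((Polynomial.X : Polynomial ℝ) + Polynomial.C 1) ^ (p - 1)) hdeg
  rw [hQ] at hsum
  have heq : ∀ x : ℝ,
      (((Polynomial.X : Polynomial ℝ) + Polynomial.C 1) * Q).eval x *
        (((Polynomial.X : Polynomial ℝ) + Polynomial.C 1) ^ (p - 1)).eval x
      = Q.eval x * (x + 1) ^ p := by
    intro x
    have hp' : (x + 1) ^ p = (x + 1) ^ (p - 1) * (x + 1) := by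
      rw [← pow_succ, Nat.sub_add_cancel hp1]
    simp only [Polynomial.eval_mul, Polynomial.eval_add, Polynomial.eval_X,
      Polynomial.eval_C, Polynomial.eval_pow, hp']
    ring
  rw [← hsum]
  exact intervalIntegral.integral_congr (fun x _ => (heq x).symm)

/-- Difference of integrals for polynomial integrands against a continuous weight. -/
private lemma int_sub_poly (u v : Polynomial ℝ) (g : ℝ → ℝ) (hg : Continuous g) :
    ∫ x in (-1 : ℝ)..1, (u - v).eval x * g x
      = (∫ x in (-1 : ℝ)..1, u.eval x * g x) - ∫ x in (-1 : ℝ)..1, v.eval x * g x := by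
  have hsub := intervalIntegral.integral_sub
    (a := (-1 : ℝ)) (b := 1) (μ := MeasureTheory.volume)
    (f := fun x => u.eval x * g x) (g := fun x => v.eval x * g x)
    (Continuous.intervalIntegrable (Continuous.mul (Polynomial.continuous _) hg) _ _)
    (Continuous.intervalIntegrable (Continuous.mul (Polynomial.continuous _) hg) _ _)
  rw [← hsub]
  apply intervalIntegral.integral_congr
  intro x _
  simp only [Polynomial.eval_sub]
  ring

/-- A nonzero polynomial of degree `< q` cannot be orthogonal to all `(x+1)^p`, `1 ≤ p ≤ q`. -/
private lemma small_orth_zero (q : ℕ) (h : Polynomial ℝ) (hdeglt : h.natDegree < q)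
    (horthh : ∀ p : ℕ, 1 ≤ p → p ≤ q →
      ∫ x in (-1 : ℝ)..1, h.eval x * (x + 1) ^ p = 0) :
    h = 0 := by
  by_contra hne
  set S : Polynomial ℝ := (Polynomial.taylor (-1) h) with hS
  have hrep : ((Polynomial.X : Polynomial ℝ) + Polynomial.C 1) * h
      = ∑ i ∈ S.support, Polynomial.C (S.coeff i) *
          ((Polynomial.X : Polynomial ℝ) + Polynomial.C 1) ^ (i + 1) := by
    have hst := Polynomial.sum_taylor_eq h (-1)
    have hXpC : (Polynomial.X : Polynomial ℝ) - Polynomial.C (-1)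
        = Polynomial.X + Polynomial.C 1 := by
      rw [Polynomial.C_neg, sub_neg_eq_add]
    rw [hXpC] at hst
    conv_lhs => rw [← hst]
    rw [Polynomial.sum_def, Finset.mul_sum]
    apply Finset.sum_congr rfl
    intro i _
    rw [pow_succ]
    ring
  have hint0 : ∫ x in (-1 : ℝ)..1, (x + 1) * h.eval x ^ 2 = 0 := by
    have heq : ∀ x : ℝ, (x + 1) * h.eval x ^ 2
        = ∑ i ∈ S.support, S.coeff i * (h.eval x * (x + 1) ^ (i + 1)) := by
      intro x
      have := congrArg (Polynomial.eval x) hrep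
      simp only [Polynomial.eval_mul, Polynomial.eval_add, Polynomial.eval_X, Polynomial.eval_C,
        Polynomial.eval_finset_sum, Polynomial.eval_pow] at this
      calc (x + 1) * h.eval x ^ 2 = h.eval x * ((x + 1) * h.eval x) := by ring
        _ = h.eval x * ∑ i ∈ S.support, S.coeff i * (x + 1) ^ (i + 1) := by rw [this]
        _ = ∑ i ∈ S.support, S.coeff i * (h.eval x * (x + 1) ^ (i + 1)) := by
            rw [Finset.mul_sum]; apply Finset.sum_congr rfl; intros; ring
    rw [intervalIntegral.integral_congr (fun x _ => heq x)]
    rw [intervalIntegral.integral_finset_sum]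
    · apply Finset.sum_eq_zero
      intro i hi
      have hile : i ≤ S.natDegree := Polynomial.le_natDegree_of_mem_supp i hi
      have hiq : i + 1 ≤ q := by
        have := Polynomial.natDegree_taylor h (-1)
        rw [← hS] at this
        omega
      rw [intervalIntegral.integral_const_mul, horthh (i + 1) (by omega) hiq, mul_zero]
    · intro i _
      apply IntervalIntegrable.const_mul
      exact (h.continuous.mul
        ((continuous_id.add continuous_const).pow (i + 1))).intervalIntegrable _ _
  have hfin := Polynomial.finite_setOf_isRoot hne
  have hinf : (Set.Ioo (-1 : ℝ) 1).Infinite := Set.Ioo_infinite (by norm_num)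
  obtain ⟨x₀, hx₀⟩ := (hinf.diff hfin).nonempty
  obtain ⟨hx₀mem, hx₀root⟩ := hx₀
  have hx₀ne : h.eval x₀ ≠ 0 := hx₀root
  have hpos : 0 < ∫ x in (-1 : ℝ)..1, (x + 1) * h.eval x ^ 2 := by
    apply intervalIntegral.integral_pos (by norm_num)
    · apply Continuous.continuousOn
      exact (continuous_id.add continuous_const).mul ((h.continuous).pow 2)
    · intro x hx
      have : (-1 : ℝ) < x := hx.1
      have h1 : (0 : ℝ) ≤ x + 1 := by linarith
      exact mul_nonneg h1 (sq_nonneg _)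
    · refine ⟨x₀, ⟨le_of_lt hx₀mem.1, le_of_lt hx₀mem.2⟩, ?_⟩
      have h1 : (0 : ℝ) < x₀ + 1 := by linarith [hx₀mem.1]
      exact mul_pos h1 (sq_pos_of_ne_zero hx₀ne)
  rw [hint0] at hpos
  exact lt_irrefl 0 hpos

/-- Characterization of Radau polynomials by orthogonality: if `f` is a polynomial of
degree `≤ q` with `∫_{−1}^{1} f(x) (x+1)^p dx = 0` for `p = 1, …, q`, then `f` is a scalar
multiple of the `q`-th Radau polynomial `Q_q = (P_q + P_{q+1})/(x+1)`. -/
theorem radau_characterization (q : ℕ) (hq : 1 ≤ q)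
    (Q : Polynomial ℝ)
    (hQ : legendrePoly q + legendrePoly (q + 1) = (Polynomial.X + Polynomial.C 1) * Q)
    (f : Polynomial ℝ) (hf : f.natDegree ≤ q)
    (horth : ∀ p : ℕ, 1 ≤ p → p ≤ q →
      ∫ x in (-1 : ℝ)..1, f.eval x * (x + 1) ^ p = 0) :
    ∃ c : ℝ, f = Polynomial.C c * Q := by
  have hLcoeff : (legendrePoly q + legendrePoly (q + 1)).coeff (q + 1) ≠ 0 := by
    have h1 : (legendrePoly q).coeff (q + 1) = 0 :=
      Polynomial.coeff_eq_zero_of_natDegree_lt (by rw [legendre_natDegree]; omega)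
    simp only [Polynomial.coeff_add, h1, zero_add]
    exact legendre_coeff_ne (q + 1)
  have hLne : legendrePoly q + legendrePoly (q + 1) ≠ 0 := fun h => hLcoeff (by simp [h])
  have hLdeg : (legendrePoly q + legendrePoly (q + 1)).natDegree = q + 1 := by
    apply le_antisymm
    · calc (legendrePoly q + legendrePoly (q + 1)).natDegree
          ≤ max (legendrePoly q).natDegree (legendrePoly (q + 1)).natDegree :=
            Polynomial.natDegree_add_le _ _
        _ ≤ q + 1 := by rw [legendre_natDegree, legendre_natDegree]; omega
    · exact Polynomial.le_natDegree_of_ne_zero hLcoeff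
  have hQne : Q ≠ 0 := by
    intro h
    rw [h, mul_zero] at hQ
    exact hLne hQ
  have hXC : ((Polynomial.X : Polynomial ℝ) + Polynomial.C 1) ≠ 0 :=
    Polynomial.X_add_C_ne_zero 1
  have hQdeg : Q.natDegree = q := by
    have := Polynomial.natDegree_mul hXC hQne
    rw [← hQ, hLdeg] at this
    simp only [Polynomial.natDegree_X_add_C] at this
    omega
  have hQlc : Q.coeff q ≠ 0 := by
    rw [← hQdeg]
    exact Polynomial.leadingCoeff_ne_zero.mpr hQne
  set c : ℝ := f.coeff q / Q.coeff q with hc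
  refine ⟨c, ?_⟩
  set h : Polynomial ℝ := f - Polynomial.C c * Q with hh
  suffices hzero : h = 0 by
    exact sub_eq_zero.mp hzero
  have hcoeffq : h.coeff q = 0 := by
    simp only [hh, Polynomial.coeff_sub, Polynomial.coeff_C_mul, hc]
    field_simp
    simp
  have hdegle : h.natDegree ≤ q := by
    have hcq : (Polynomial.C c * Q).natDegree ≤ q :=
      le_trans (Polynomial.natDegree_C_mul_le _ _) hQdeg.le
    simpa using Polynomial.natDegree_sub_le_of_le hf hcq
  by_cases hne : h = 0
  · exact hne
  have hdeglt : h.natDegree < q := by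
    rcases lt_or_eq_of_le hdegle with h' | h'
    · exact h'
    · exfalso
      apply Polynomial.leadingCoeff_ne_zero.mpr hne
      rw [Polynomial.leadingCoeff, h', hcoeffq]
  apply small_orth_zero q h hdeglt
  intro p hp1 hpq
  have hsub := int_sub_poly f (Polynomial.C c * Q) (fun x => (x + 1) ^ p)
    ((continuous_id.add continuous_const).pow p)
  rw [hh, hsub, horth p hp1 hpq]
  have h1 : ∫ x in (-1 : ℝ)..1, (Polynomial.C c * Q).eval x * (x + 1) ^ p = 0 := by
    simp only [Polynomial.eval_mul, Polynomial.eval_C, mul_assoc]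
    rw [intervalIntegral.integral_const_mul, Q_orth q Q hQ p hp1 hpq, mul_zero]
  rw [h1, sub_zero]
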